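/- For $u\in L^q(\mathbb{R}^N,\mathbb{R}^d)$, $q\ge 1$, define $\hat A_{u,q}(\mathbb{R}^N):=\limsup_{\varepsilon\to 0^+}\int_{B_1(0)}\int_{\mathbb{R}^N}\frac{1}{\varepsilon|z|}|u(x+\varepsilon z)-u(x)|^q\,dx\,dz$ and $\hat B_{u,q}(\mathbb{R}^N):=\limsup_{\varepsilon\to 0^+}\sup_{\vec k\in S^{N-1}}\int_{\mathbb{R}^N}\frac{1}{\varepsilon}|u(x+\varepsilon\vec k)-u(x)|^q\,dx$. Then $$\frac{\hat A_{u,q}(\mathbb{R}^N)}{\mathcal{L}^N(B_1(0))}\le \hat B_{u,q}(\mathbb{R}^N)\le 2^{N+q}\,\frac{\hat A_{u,q}(\mathbb{R}^N)}{\mathcal{L}^N(B_1(0))}.$$ -/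

import Mathlib

open MeasureTheory Metric Set Filter Topology
open scoped ENNReal

noncomputable section

private lemma tri_aux {d : ℕ} {q : ℝ} (hq : 1 ≤ q) (a b c : EuclideanSpace ℝ (Fin d)) :
    ENNReal.ofReal (‖a - c‖ ^ q) ≤
      (2:ℝ≥0∞) ^ (q - 1) * (ENNReal.ofReal (‖a - b‖ ^ q) + ENNReal.ofReal (‖b - c‖ ^ q)) := by
  have hq0 : 0 ≤ q := le_trans zero_le_one hq
  rw [← ENNReal.ofReal_rpow_of_nonneg (norm_nonneg _) hq0,
      ← ENNReal.ofReal_rpow_of_nonneg (norm_nonneg _) hq0,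
      ← ENNReal.ofReal_rpow_of_nonneg (norm_nonneg _) hq0]
  calc ENNReal.ofReal ‖a - c‖ ^ q ≤ (ENNReal.ofReal ‖a - b‖ + ENNReal.ofReal ‖b - c‖) ^ q := by
        apply ENNReal.rpow_le_rpow _ hq0
        rw [← ENNReal.ofReal_add (norm_nonneg _) (norm_nonneg _)]
        exact ENNReal.ofReal_le_ofReal (norm_sub_le_norm_sub_add_norm_sub _ _ _)
    _ ≤ _ := ENNReal.rpow_add_le_mul_rpow_add_rpow _ _ hq

private lemma meas_aux {N d : ℕ} {q : ℝ} (hq0 : 0 ≤ q)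
    {v : EuclideanSpace ℝ (Fin N) → EuclideanSpace ℝ (Fin d)} (hv : Measurable v)
    (ε : ℝ) :
    Measurable fun z : EuclideanSpace ℝ (Fin N) =>
      ∫⁻ x, ENNReal.ofReal (‖v (x + ε • z) - v x‖ ^ q) := by
  apply Measurable.lintegral_prod_right
  exact (((Real.continuous_rpow_const hq0).measurable).comp
    ((hv.comp (measurable_snd.add (measurable_fst.const_smul ε))).sub
      (hv.comp measurable_snd)).norm).ennreal_ofReal

/-- The key pointwise (in `ε`) estimate for the second inequality. -/
private lemma key2 {N d : ℕ} {q : ℝ} (hq : 1 ≤ q)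
    {v : EuclideanSpace ℝ (Fin N) → EuclideanSpace ℝ (Fin d)} (hv : Measurable v)
    {ε : ℝ} (hε : 0 < ε) :
    (⨆ (k : EuclideanSpace ℝ (Fin N)) (_ : ‖k‖ = 1),
        (∫⁻ x, ENNReal.ofReal (‖v (x + ε • k) - v x‖ ^ q)) / ENNReal.ofReal ε)
      ≤ (ENNReal.ofReal ((2:ℝ) ^ ((N : ℝ) + q)) /
          volume (ball (0 : EuclideanSpace ℝ (Fin N)) 1)) *
        ∫⁻ z in ball (0 : EuclideanSpace ℝ (Fin N)) 1,
          (∫⁻ x, ENNReal.ofReal (‖v (x + ε • z) - v x‖ ^ q)) /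
            ENNReal.ofReal (ε * ‖z‖) := by
  have hq0 : 0 ≤ q := le_trans zero_le_one hq
  apply iSup₂_le
  intro k hk
  haveI : Nontrivial (EuclideanSpace ℝ (Fin N)) :=
    nontrivial_of_ne k 0 (by intro h; rw [h, norm_zero] at hk; norm_num at hk)
  set F : EuclideanSpace ℝ (Fin N) → ℝ≥0∞ :=
    fun w => ∫⁻ x, ENNReal.ofReal (‖v (x + w) - v x‖ ^ q) with hFdef
  have hFeq : ∀ w : EuclideanSpace ℝ (Fin N),
      (∫⁻ x, ENNReal.ofReal (‖v (x + w) - v x‖ ^ q)) = F w := fun _ => rfl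
  set c2 : ℝ≥0∞ := (2:ℝ≥0∞) ^ (q - 1) with hc2
  have hc2top : c2 ≠ ⊤ := by
    simp [hc2, ENNReal.rpow_ne_top_of_nonneg (sub_nonneg.2 hq)]
  set D : Set (EuclideanSpace ℝ (Fin N)) := ball ((2⁻¹:ℝ) • k) 2⁻¹ with hD
  have hmeasD : MeasurableSet D := measurableSet_ball
  have hnormc : ‖(2⁻¹:ℝ) • k‖ = 2⁻¹ := by
    rw [norm_smul, hk]; norm_num
  have hksub : k - (2⁻¹:ℝ) • k = (2⁻¹:ℝ) • k := by
    rw [sub_eq_iff_eq_add, ← add_smul]; norm_num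
  have hDsymm : ∀ z : EuclideanSpace ℝ (Fin N), z ∈ D ↔ k - z ∈ D := by
    intro z
    simp only [hD, mem_ball, dist_eq_norm]
    constructor <;> intro h
    · calc ‖k - z - (2⁻¹:ℝ) • k‖ = ‖(2⁻¹:ℝ) • k - z‖ := by rw [sub_right_comm, hksub]
        _ = ‖z - (2⁻¹:ℝ) • k‖ := norm_sub_rev _ _
        _ < 2⁻¹ := h
    · calc ‖z - (2⁻¹:ℝ) • k‖ = ‖(2⁻¹:ℝ) • k - z‖ := norm_sub_rev _ _
        _ = ‖k - z - (2⁻¹:ℝ) • k‖ := by rw [sub_right_comm, hksub]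
        _ < 2⁻¹ := h
  have hDsub : D ⊆ ball (0 : EuclideanSpace ℝ (Fin N)) 1 := by
    intro z hz
    simp only [hD, mem_ball, dist_eq_norm] at hz ⊢
    calc ‖z - 0‖ = ‖z - (2⁻¹:ℝ) • k + (2⁻¹:ℝ) • k‖ := by rw [sub_zero, sub_add_cancel]
      _ ≤ ‖z - (2⁻¹:ℝ) • k‖ + ‖(2⁻¹:ℝ) • k‖ := norm_add_le _ _
      _ < 2⁻¹ + 2⁻¹ := by rw [hnormc]; exact add_lt_add_left hz _
      _ = 1 := by norm_num
  have hzD : ∀ z ∈ D, z ≠ 0 := by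
    intro z hz h0
    simp only [hD, mem_ball, dist_eq_norm, h0, zero_sub, norm_neg, hnormc] at hz
    exact lt_irrefl _ hz
  have hvolD : volume D = ENNReal.ofReal ((2⁻¹:ℝ) ^ N) *
      volume (ball (0 : EuclideanSpace ℝ (Fin N)) 1) := by
    rw [hD, Measure.addHaar_ball _ _ (by norm_num : (0:ℝ) ≤ 2⁻¹), finrank_euclideanSpace_fin]
  have hV0 : volume (ball (0 : EuclideanSpace ℝ (Fin N)) 1) ≠ 0 :=
    (measure_ball_pos volume 0 one_pos).ne'
  have hVtop : volume (ball (0 : EuclideanSpace ℝ (Fin N)) 1) ≠ ⊤ := measure_ball_lt_top.ne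
  have hD0 : volume D ≠ 0 := by
    rw [hvolD]
    exact mul_ne_zero (ENNReal.ofReal_pos.2 (by positivity)).ne' hV0
  have hDtop : volume D ≠ ⊤ := by
    rw [hvolD]
    exact ENNReal.mul_ne_top ENNReal.ofReal_ne_top hVtop
  have hFz : Measurable fun z : EuclideanSpace ℝ (Fin N) => F (ε • z) := by
    have := meas_aux hq0 hv ε
    simpa only [hFeq] using this
  have hFkz : Measurable fun z : EuclideanSpace ℝ (Fin N) => F (ε • (k - z)) :=
    hFz.comp (measurable_const.sub measurable_id)
  -- pointwise bound
  have step1 : ∀ z : EuclideanSpace ℝ (Fin N),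
      F (ε • k) ≤ c2 * (F (ε • (k - z)) + F (ε • z)) := by
    intro z
    have tri : ∀ x : EuclideanSpace ℝ (Fin N),
        ENNReal.ofReal (‖v (x + ε • k) - v x‖ ^ q) ≤
        c2 * (ENNReal.ofReal (‖v (x + ε • k) - v (x + ε • z)‖ ^ q) +
          ENNReal.ofReal (‖v (x + ε • z) - v x‖ ^ q)) := fun x =>
      tri_aux hq (v (x + ε • k)) (v (x + ε • z)) (v x)
    have hmeas1 : Measurable fun x : EuclideanSpace ℝ (Fin N) =>
        ENNReal.ofReal (‖v (x + ε • k) - v (x + ε • z)‖ ^ q) :=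
      (((Real.continuous_rpow_const hq0).measurable).comp
        ((hv.comp (measurable_id.add_const (ε • k))).sub
          (hv.comp (measurable_id.add_const (ε • z)))).norm).ennreal_ofReal
    have trans1 : (∫⁻ x, ENNReal.ofReal (‖v (x + ε • k) - v (x + ε • z)‖ ^ q)) =
        F (ε • (k - z)) := by
      have h := lintegral_add_right_eq_self (μ := volume)
        (fun x => ENNReal.ofReal (‖v (x + ε • (k - z)) - v x‖ ^ q)) (ε • z)
      rw [← hFeq (ε • (k - z)), ← h]
      congr 1
      funext x
      congr 3
      rw [add_assoc, ← smul_add, add_sub_cancel]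
    calc F (ε • k) ≤ ∫⁻ x, c2 * (ENNReal.ofReal (‖v (x + ε • k) - v (x + ε • z)‖ ^ q) +
          ENNReal.ofReal (‖v (x + ε • z) - v x‖ ^ q)) := lintegral_mono tri
      _ = c2 * ((∫⁻ x, ENNReal.ofReal (‖v (x + ε • k) - v (x + ε • z)‖ ^ q)) +
          ∫⁻ x, ENNReal.ofReal (‖v (x + ε • z) - v x‖ ^ q)) := by
          rw [lintegral_const_mul' _ _ hc2top, lintegral_add_left hmeas1]
      _ = c2 * (F (ε • (k - z)) + F (ε • z)) := by rw [trans1, hFeq]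
  -- integrate over D
  have step2 : volume D * F (ε • k) ≤
      c2 * ((∫⁻ z in D, F (ε • (k - z))) + ∫⁻ z in D, F (ε • z)) := by
    calc volume D * F (ε • k) = ∫⁻ _ in D, F (ε • k) := by rw [setLIntegral_const, mul_comm]
      _ ≤ ∫⁻ z in D, c2 * (F (ε • (k - z)) + F (ε • z)) := lintegral_mono fun z => step1 z
      _ = c2 * ((∫⁻ z in D, F (ε • (k - z))) + ∫⁻ z in D, F (ε • z)) := by
          rw [lintegral_const_mul' _ _ hc2top, lintegral_add_left hFkz]
  -- change of variables z ↦ k - z on D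
  have step3 : (∫⁻ z in D, F (ε • (k - z))) = ∫⁻ z in D, F (ε • z) := by
    set g : EuclideanSpace ℝ (Fin N) → ℝ≥0∞ := D.indicator (fun w => F (ε • w)) with hg
    have h1 : (∫⁻ z in D, F (ε • (k - z))) = ∫⁻ z, g (k - z) := by
      rw [← lintegral_indicator hmeasD]
      congr 1
      funext z
      by_cases hz : z ∈ D
      · rw [indicator_of_mem hz, hg, indicator_of_mem ((hDsymm z).1 hz)]
      · rw [indicator_of_notMem hz, hg,
          indicator_of_notMem (fun h => hz ((hDsymm z).2 h))]
    have h2 : (∫⁻ z, g (k - z)) = ∫⁻ z, g (k + z) := by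
      have heq : ∀ z : EuclideanSpace ℝ (Fin N), k - z = k + (-z) := fun z =>
        sub_eq_add_neg k z
      simp_rw [heq]
      exact ((Measure.measurePreserving_neg volume).lintegral_map_equiv
        (fun z => g (k + z)) (MeasurableEquiv.neg (EuclideanSpace ℝ (Fin N)))).symm
    rw [h1, h2, lintegral_add_left_eq_self (fun z => g z) k, hg,
      lintegral_indicator hmeasD]
  -- bound F (ε • z) by the A-integrand on D
  have step4 : (∫⁻ z in D, F (ε • z)) ≤
      ENNReal.ofReal ε * ∫⁻ z in ball (0 : EuclideanSpace ℝ (Fin N)) 1,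
        F (ε • z) / ENNReal.ofReal (ε * ‖z‖) := by
    have hb : ∀ z ∈ D, F (ε • z) ≤ F (ε • z) / ENNReal.ofReal (ε * ‖z‖) * ENNReal.ofReal ε := by
      intro z hz
      have hz0 : z ≠ 0 := hzD z hz
      have hnz : (0:ℝ) < ‖z‖ := norm_pos_iff.2 hz0
      have hd0 : ENNReal.ofReal (ε * ‖z‖) ≠ 0 := (ENNReal.ofReal_pos.2 (mul_pos hε hnz)).ne'
      have hdt : ENNReal.ofReal (ε * ‖z‖) ≠ ⊤ := ENNReal.ofReal_ne_top
      calc F (ε • z) = F (ε • z) / ENNReal.ofReal (ε * ‖z‖) * ENNReal.ofReal (ε * ‖z‖) :=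
            (ENNReal.div_mul_cancel hd0 hdt).symm
        _ ≤ F (ε • z) / ENNReal.ofReal (ε * ‖z‖) * ENNReal.ofReal ε := by
            apply mul_le_mul_right
            apply ENNReal.ofReal_le_ofReal
            have hz1 : ‖z‖ ≤ 1 := le_of_lt (by simpa [dist_eq_norm] using hDsub hz)
            calc ε * ‖z‖ ≤ ε * 1 := mul_le_mul_of_nonneg_left hz1 hε.le
              _ = ε := mul_one ε
    calc (∫⁻ z in D, F (ε • z))
        ≤ ∫⁻ z in D, F (ε • z) / ENNReal.ofReal (ε * ‖z‖) * ENNReal.ofReal ε :=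
          setLIntegral_mono
            ((hFz.div ((measurable_norm.const_mul ε).ennreal_ofReal)).mul_const _) hb
      _ = ENNReal.ofReal ε * ∫⁻ z in D, F (ε • z) / ENNReal.ofReal (ε * ‖z‖) := by
          rw [← lintegral_const_mul' _ _ ENNReal.ofReal_ne_top]
          simp_rw [mul_comm]
      _ ≤ ENNReal.ofReal ε * ∫⁻ z in ball (0 : EuclideanSpace ℝ (Fin N)) 1,
            F (ε • z) / ENNReal.ofReal (ε * ‖z‖) := by
          apply mul_le_mul_right
          exact lintegral_mono' (Measure.restrict_mono hDsub le_rfl) le_rfl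
  -- put things together
  set I : ℝ≥0∞ := ∫⁻ z in ball (0 : EuclideanSpace ℝ (Fin N)) 1,
    F (ε • z) / ENNReal.ofReal (ε * ‖z‖) with hI
  have main : volume D * F (ε • k) ≤ 2 * c2 * ENNReal.ofReal ε * I := by
    calc volume D * F (ε • k)
        ≤ c2 * ((∫⁻ z in D, F (ε • (k - z))) + ∫⁻ z in D, F (ε • z)) := step2
      _ = 2 * c2 * ∫⁻ z in D, F (ε • z) := by rw [step3, two_mul]; ring
      _ ≤ 2 * c2 * (ENNReal.ofReal ε * I) := mul_le_mul_right step4 _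
      _ = 2 * c2 * ENNReal.ofReal ε * I := by ring
  have hε0 : ENNReal.ofReal ε ≠ 0 := (ENNReal.ofReal_pos.2 hε).ne'
  have hεt : ENNReal.ofReal ε ≠ ⊤ := ENNReal.ofReal_ne_top
  have hconst : ENNReal.ofReal ((2:ℝ) ^ ((N : ℝ) + q)) = 2 * c2 * (2:ℝ≥0∞) ^ (N:ℕ) := by
    have h2 : ENNReal.ofReal ((2:ℝ) ^ ((N : ℝ) + q)) = (2:ℝ≥0∞) ^ ((N:ℝ) + q) := by
      rw [← ENNReal.ofReal_rpow_of_pos (by norm_num : (0:ℝ) < 2)]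
      norm_num
    rw [h2]
    calc (2:ℝ≥0∞) ^ ((N:ℝ) + q) = 2 ^ (N:ℝ) * 2 ^ q :=
          ENNReal.rpow_add _ _ (by norm_num) (by norm_num)
      _ = 2 ^ (N:ℕ) * (2 ^ (1:ℝ) * 2 ^ (q-1)) := by
          rw [ENNReal.rpow_natCast, ← ENNReal.rpow_add _ _ (by norm_num) (by norm_num)]
          norm_num
      _ = 2 * c2 * 2 ^ (N:ℕ) := by rw [ENNReal.rpow_one, hc2]; ring
  have hvolDinv : (volume D)⁻¹ =
      (2:ℝ≥0∞) ^ (N:ℕ) * (volume (ball (0 : EuclideanSpace ℝ (Fin N)) 1))⁻¹ := by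
    have hofr : ENNReal.ofReal ((2⁻¹:ℝ) ^ N) = ((2:ℝ≥0∞)⁻¹) ^ N := by
      rw [ENNReal.ofReal_pow (by norm_num : (0:ℝ) ≤ 2⁻¹),
        ENNReal.ofReal_inv_of_pos (by norm_num : (0:ℝ) < 2)]
      norm_num
    rw [hvolD, ENNReal.mul_inv (Or.inl (ENNReal.ofReal_pos.2 (by positivity)).ne')
      (Or.inl ENNReal.ofReal_ne_top), hofr, ← ENNReal.inv_pow, inv_inv]
  rw [ENNReal.div_le_iff_le_mul (Or.inl hε0) (Or.inl hεt)]
  have hFle : F (ε • k) ≤ 2 * c2 * ENNReal.ofReal ε * I / volume D := by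
    rw [ENNReal.le_div_iff_mul_le (Or.inl hD0) (Or.inl hDtop), mul_comm]
    exact main
  refine le_trans hFle (le_of_eq ?_)
  rw [ENNReal.div_eq_inv_mul, hvolDinv, ENNReal.div_eq_inv_mul, hconst]
  ring

/-- The key pointwise (in `ε`) estimate for the first inequality. -/
private lemma key1 {N d : ℕ} {q : ℝ} (hq : 1 ≤ q)
    (v : EuclideanSpace ℝ (Fin N) → EuclideanSpace ℝ (Fin d))
    {ε : ℝ} (hε : 0 < ε) :
    (∫⁻ z in ball (0 : EuclideanSpace ℝ (Fin N)) 1,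
        (∫⁻ x, ENNReal.ofReal (‖v (x + ε • z) - v x‖ ^ q)) / ENNReal.ofReal (ε * ‖z‖))
      ≤ volume (ball (0 : EuclideanSpace ℝ (Fin N)) 1) *
        ⨆ t ∈ Ioo (0:ℝ) ε, ⨆ (k : EuclideanSpace ℝ (Fin N)) (_ : ‖k‖ = 1),
          (∫⁻ x, ENNReal.ofReal (‖v (x + t • k) - v x‖ ^ q)) / ENNReal.ofReal t := by
  have hq0 : q ≠ 0 := by linarith
  set S : ℝ≥0∞ := ⨆ t ∈ Ioo (0:ℝ) ε, ⨆ (k : EuclideanSpace ℝ (Fin N)) (_ : ‖k‖ = 1),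
    (∫⁻ x, ENNReal.ofReal (‖v (x + t • k) - v x‖ ^ q)) / ENNReal.ofReal t with hS
  have hb : ∀ z ∈ ball (0 : EuclideanSpace ℝ (Fin N)) 1,
      (∫⁻ x, ENNReal.ofReal (‖v (x + ε • z) - v x‖ ^ q)) / ENNReal.ofReal (ε * ‖z‖) ≤ S := by
    intro z hz
    rcases eq_or_ne z 0 with rfl | hz0
    · have : (∫⁻ x, ENNReal.ofReal (‖v (x + ε • (0 : EuclideanSpace ℝ (Fin N))) - v x‖ ^ q))
          = 0 := by
        simp [Real.zero_rpow hq0]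
      rw [this, ENNReal.zero_div]
      exact zero_le
    · have hnz : (0:ℝ) < ‖z‖ := norm_pos_iff.2 hz0
      have hz1 : ‖z‖ < 1 := by simpa [dist_eq_norm] using hz
      have ht : ε * ‖z‖ ∈ Ioo (0:ℝ) ε := by
        constructor
        · exact mul_pos hε hnz
        · calc ε * ‖z‖ < ε * 1 := by exact (mul_lt_mul_iff_right₀ hε).2 hz1
            _ = ε := mul_one ε
      set k₀ : EuclideanSpace ℝ (Fin N) := ‖z‖⁻¹ • z with hk₀def
      have hk₀ : ‖k₀‖ = 1 := by
        rw [hk₀def, norm_smul, norm_inv, norm_norm, inv_mul_cancel₀ hnz.ne']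
      have hsm : ε • z = (ε * ‖z‖) • k₀ := by
        rw [hk₀def, smul_smul, mul_assoc, mul_inv_cancel₀ hnz.ne', mul_one]
      rw [hsm]
      calc (∫⁻ x, ENNReal.ofReal (‖v (x + (ε * ‖z‖) • k₀) - v x‖ ^ q)) /
            ENNReal.ofReal (ε * ‖z‖)
          ≤ ⨆ (k : EuclideanSpace ℝ (Fin N)) (_ : ‖k‖ = 1),
            (∫⁻ x, ENNReal.ofReal (‖v (x + (ε * ‖z‖) • k) - v x‖ ^ q)) /
              ENNReal.ofReal (ε * ‖z‖) :=
            le_iSup₂ (f := fun (k : EuclideanSpace ℝ (Fin N)) (_ : ‖k‖ = 1) =>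
              (∫⁻ x, ENNReal.ofReal (‖v (x + (ε * ‖z‖) • k) - v x‖ ^ q)) /
                ENNReal.ofReal (ε * ‖z‖)) k₀ hk₀
        _ ≤ S := le_biSup (f := fun t : ℝ =>
            ⨆ (k : EuclideanSpace ℝ (Fin N)) (_ : ‖k‖ = 1),
              (∫⁻ x, ENNReal.ofReal (‖v (x + t • k) - v x‖ ^ q)) / ENNReal.ofReal t) ht
  calc (∫⁻ z in ball (0 : EuclideanSpace ℝ (Fin N)) 1,
        (∫⁻ x, ENNReal.ofReal (‖v (x + ε • z) - v x‖ ^ q)) / ENNReal.ofReal (ε * ‖z‖))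
      ≤ ∫⁻ _ in ball (0 : EuclideanSpace ℝ (Fin N)) 1, S := setLIntegral_mono measurable_const hb
    _ = volume (ball (0 : EuclideanSpace ℝ (Fin N)) 1) * S := by
        rw [setLIntegral_const, mul_comm]

theorem stmt3 (N d : ℕ) (q : ℝ) (hq : 1 ≤ q)
    (u : EuclideanSpace ℝ (Fin N) → EuclideanSpace ℝ (Fin d))
    (hu : MemLp u (ENNReal.ofReal q) volume)
    (A B : ℝ≥0∞)
    (hA : A = Filter.limsup (fun ε : ℝ =>
        ∫⁻ z in ball (0 : EuclideanSpace ℝ (Fin N)) 1,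
          (∫⁻ x, ENNReal.ofReal (‖u (x + ε • z) - u x‖ ^ q)) /
            ENNReal.ofReal (ε * ‖z‖)) (𝓝[>] (0 : ℝ)))
    (hB : B = Filter.limsup (fun ε : ℝ =>
        ⨆ (k : EuclideanSpace ℝ (Fin N)) (_ : ‖k‖ = 1),
          (∫⁻ x, ENNReal.ofReal (‖u (x + ε • k) - u x‖ ^ q)) /
            ENNReal.ofReal ε) (𝓝[>] (0 : ℝ))) :
    A / volume (ball (0 : EuclideanSpace ℝ (Fin N)) 1) ≤ B ∧
      B ≤ ENNReal.ofReal ((2 : ℝ) ^ ((N : ℝ) + q)) *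
        (A / volume (ball (0 : EuclideanSpace ℝ (Fin N)) 1)) := by
  obtain ⟨v, hvmeas, huv⟩ : ∃ v : EuclideanSpace ℝ (Fin N) → EuclideanSpace ℝ (Fin d),
      Measurable v ∧ u =ᵐ[volume] v :=
    ⟨hu.1.mk u, hu.1.stronglyMeasurable_mk.measurable, hu.1.ae_eq_mk⟩
  have hFeq : ∀ w : EuclideanSpace ℝ (Fin N),
      (∫⁻ x, ENNReal.ofReal (‖u (x + w) - u x‖ ^ q)) =
      ∫⁻ x, ENNReal.ofReal (‖v (x + w) - v x‖ ^ q) := by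
    intro w
    apply lintegral_congr_ae
    have hmp := measurePreserving_add_right (volume : Measure (EuclideanSpace ℝ (Fin N))) w
    have h1 : (fun x => u (x + w)) =ᵐ[volume] fun x => v (x + w) :=
      ae_eq_comp (μ := volume) (f := fun x : EuclideanSpace ℝ (Fin N) => x + w)
        (hmp.measurable.aemeasurable) (by rwa [hmp.map_eq])
    filter_upwards [h1, huv] with x h1x h2x
    rw [h1x, h2x]
  simp only [hFeq] at hA hB
  set V : ℝ≥0∞ := volume (ball (0 : EuclideanSpace ℝ (Fin N)) 1) with hV
  have hV0 : V ≠ 0 := (measure_ball_pos volume 0 one_pos).ne'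
  have hVtop : V ≠ ⊤ := measure_ball_lt_top.ne
  constructor
  · -- A / V ≤ B
    apply ENNReal.div_le_of_le_mul'
    rw [hA, hB]
    have hev : (fun ε : ℝ =>
        ∫⁻ z in ball (0 : EuclideanSpace ℝ (Fin N)) 1,
          (∫⁻ x, ENNReal.ofReal (‖v (x + ε • z) - v x‖ ^ q)) / ENNReal.ofReal (ε * ‖z‖))
        ≤ᶠ[𝓝[>] (0:ℝ)] fun ε : ℝ => V *
          ⨆ t ∈ Ioo (0:ℝ) ε, ⨆ (k : EuclideanSpace ℝ (Fin N)) (_ : ‖k‖ = 1),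
            (∫⁻ x, ENNReal.ofReal (‖v (x + t • k) - v x‖ ^ q)) / ENNReal.ofReal t := by
      filter_upwards [self_mem_nhdsWithin] with ε hε
      exact key1 hq v hε
    refine le_trans (limsup_le_limsup hev) ?_
    have hstep : ∀ δ : ℝ, 0 < δ →
        Filter.limsup (fun ε : ℝ => V *
          ⨆ t ∈ Ioo (0:ℝ) ε, ⨆ (k : EuclideanSpace ℝ (Fin N)) (_ : ‖k‖ = 1),
            (∫⁻ x, ENNReal.ofReal (‖v (x + t • k) - v x‖ ^ q)) / ENNReal.ofReal t)
          (𝓝[>] (0:ℝ)) ≤ V *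
          ⨆ t ∈ Ioo (0:ℝ) δ, ⨆ (k : EuclideanSpace ℝ (Fin N)) (_ : ‖k‖ = 1),
            (∫⁻ x, ENNReal.ofReal (‖v (x + t • k) - v x‖ ^ q)) / ENNReal.ofReal t := by
      intro δ hδ
      apply limsup_le_of_le (by isBoundedDefault)
      filter_upwards [Ioo_mem_nhdsGT_of_mem (Set.mem_Ico.2 ⟨le_refl 0, hδ⟩)] with ε hε
      exact mul_le_mul_right (biSup_mono (Ioo_subset_Ioo le_rfl hε.2.le)) V
    have hBform : Filter.limsup (fun ε : ℝ =>
        ⨆ (k : EuclideanSpace ℝ (Fin N)) (_ : ‖k‖ = 1),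
          (∫⁻ x, ENNReal.ofReal (‖v (x + ε • k) - v x‖ ^ q)) / ENNReal.ofReal ε)
        (𝓝[>] (0:ℝ)) = ⨅ (δ : ℝ) (_ : 0 < δ),
          ⨆ t ∈ Ioo (0:ℝ) δ, ⨆ (k : EuclideanSpace ℝ (Fin N)) (_ : ‖k‖ = 1),
            (∫⁻ x, ENNReal.ofReal (‖v (x + t • k) - v x‖ ^ q)) / ENNReal.ofReal t :=
      (nhdsGT_basis (0:ℝ)).limsup_eq_iInf_iSup
    rw [hBform]
    calc Filter.limsup _ (𝓝[>] (0:ℝ)) ≤ ⨅ (δ : ℝ) (_ : 0 < δ), V *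
          ⨆ t ∈ Ioo (0:ℝ) δ, ⨆ (k : EuclideanSpace ℝ (Fin N)) (_ : ‖k‖ = 1),
            (∫⁻ x, ENNReal.ofReal (‖v (x + t • k) - v x‖ ^ q)) / ENNReal.ofReal t :=
        le_iInf₂ hstep
      _ = V * ⨅ (δ : ℝ) (_ : 0 < δ),
          ⨆ t ∈ Ioo (0:ℝ) δ, ⨆ (k : EuclideanSpace ℝ (Fin N)) (_ : ‖k‖ = 1),
            (∫⁻ x, ENNReal.ofReal (‖v (x + t • k) - v x‖ ^ q)) / ENNReal.ofReal t := by
        simp_rw [ENNReal.mul_iInf_of_ne hV0 hVtop]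
  · -- B ≤ C * (A / V)
    set C : ℝ≥0∞ := ENNReal.ofReal ((2 : ℝ) ^ ((N : ℝ) + q)) with hC
    have hCtop : C ≠ ⊤ := ENNReal.ofReal_ne_top
    have hCV : C / V ≠ ⊤ := (ENNReal.div_lt_top hCtop hV0).ne
    rw [hA, hB]
    have hev : (fun ε : ℝ =>
        ⨆ (k : EuclideanSpace ℝ (Fin N)) (_ : ‖k‖ = 1),
          (∫⁻ x, ENNReal.ofReal (‖v (x + ε • k) - v x‖ ^ q)) / ENNReal.ofReal ε)
        ≤ᶠ[𝓝[>] (0:ℝ)] fun ε : ℝ => C / V *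
          ∫⁻ z in ball (0 : EuclideanSpace ℝ (Fin N)) 1,
            (∫⁻ x, ENNReal.ofReal (‖v (x + ε • z) - v x‖ ^ q)) /
              ENNReal.ofReal (ε * ‖z‖) := by
      filter_upwards [self_mem_nhdsWithin] with ε hε
      exact key2 hq hvmeas hε
    refine le_trans (limsup_le_limsup hev) ?_
    rw [ENNReal.limsup_const_mul_of_ne_top hCV]
    apply le_of_eq
    rw [ENNReal.div_eq_inv_mul, ENNReal.div_eq_inv_mul]
    ring
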